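/- For c ∈ ℂ with |c| = 1, define a_c(z) = ¼·ln(|z|² + 1) and u_c(z) = (z, c)/√(|z|² + 1), and write z = s + it. Then for every z ∈ ℂ the map ũ_c = (a_c, u_c) satisfies the pseudo-holomorphic curve equations: (i) ∂_s a_c(z) = λ₀|_{u_c(z)}(∂_t u_c(z)) and ∂_t a_c(z) = −λ₀|_{u_c(z)}(∂_s u_c(z)); (ii) the projections π(∂_s u_c(z)) and π(∂_t u_c(z)) lie in the span of X₁(u_c(z)) and X₂(u_c(z)), and π(∂_s u_c(z)) + J_{u_c(z)}(π(∂_t u_c(z))) = 0. -/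

import Mathlib

open Complex

/-- The Liouville form: `Λ₀|_p(v) = ½(x₁v_{y₁} − y₁v_{x₁} + x₂v_{y₂} − y₂v_{x₂})`. -/
noncomputable def Λ0 (p v : ℂ × ℂ) : ℝ :=
  (1 / 2) * (p.1.re * v.1.im - p.1.im * v.1.re + p.2.re * v.2.im - p.2.im * v.2.re)

/-- `X₁(p) = (y₂, x₂, −y₁, −x₁)` in complex notation. -/
def X1 (p : ℂ × ℂ) : ℂ × ℂ :=
  (Complex.I * (starRingEnd ℂ) p.2, -Complex.I * (starRingEnd ℂ) p.1)

/-- `X₂(p) = (−x₂, y₂, x₁, −y₁)` in complex notation. -/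
def X2 (p : ℂ × ℂ) : ℂ × ℂ :=
  (-(starRingEnd ℂ) p.2, (starRingEnd ℂ) p.1)

/-- The Reeb vector field `R₀(p) = 2ip`. -/
def R0 (p : ℂ × ℂ) : ℂ × ℂ := (2 * Complex.I * p.1, 2 * Complex.I * p.2)

/-- The projection along the Reeb vector field: `π(v) = v − λ₀|_p(v)·R₀(p)`. -/
noncomputable def projξ (p v : ℂ × ℂ) : ℂ × ℂ := v - Λ0 p v • R0 p

/-- `a_c(z) = ¼ ln(|z|² + 1)`. -/
noncomputable def ac (z : ℂ) : ℝ := (1 / 4) * Real.log (‖z‖ ^ 2 + 1)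

/-- `u_c(z) = (z, c)/√(|z|² + 1)`. -/
noncomputable def uc (c : ℂ) (z : ℂ) : ℂ × ℂ :=
  (z / Complex.ofReal (Real.sqrt (‖z‖ ^ 2 + 1)),
   c / Complex.ofReal (Real.sqrt (‖z‖ ^ 2 + 1)))

noncomputable def Nf (z : ℂ) : ℝ := ‖z‖ ^ 2 + 1
lemma Nf_pos (z : ℂ) : 0 < Nf z := by unfold Nf; positivity
noncomputable def LN (z : ℂ) : ℂ →L[ℝ] ℝ := (2*z.re) • Complex.reCLM + (2*z.im) • Complex.imCLM
lemma LN_apply (z v : ℂ) : LN z v = 2*z.re*v.re + 2*z.im*v.im := by simp [LN]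
lemma hasFDerivAt_Nf (z : ℂ) : HasFDerivAt Nf (LN z) z := by
  have h : HasFDerivAt (fun w : ℂ => w.re * w.re + w.im * w.im + 1)
      ((z.re • Complex.reCLM + z.re • Complex.reCLM) +
        (z.im • Complex.imCLM + z.im • Complex.imCLM)) z :=
    (((Complex.reCLM.hasFDerivAt (x := z)).mul (Complex.reCLM.hasFDerivAt)).add
      ((Complex.imCLM.hasFDerivAt (x := z)).mul (Complex.imCLM.hasFDerivAt))).add_const 1
  convert h using 1
  · funext w
    simp [Nf, Complex.sq_norm, Complex.normSq_apply]
  · ext v <;> simp [LN] <;> ring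
noncomputable def sN (z : ℂ) : ℝ := Real.sqrt (Nf z)
lemma sN_pos (z : ℂ) : 0 < sN z := Real.sqrt_pos.2 (Nf_pos z)
lemma sN_sq (z : ℂ) : sN z ^ 2 = Nf z := Real.sq_sqrt (Nf_pos z).le
lemma hasFDerivAt_sN (z : ℂ) : HasFDerivAt sN ((1 / (2 * sN z)) • LN z) z :=
  (Real.hasDerivAt_sqrt (Nf_pos z).ne').comp_hasFDerivAt z (hasFDerivAt_Nf z)
lemma hasFDerivAt_inv_sN (z : ℂ) :
    HasFDerivAt (fun w => ((sN w : ℂ))⁻¹)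
      ((-(((sN z : ℂ)) ^ 2)⁻¹) • (Complex.ofRealCLM.comp ((1 / (2 * sN z)) • LN z))) z := by
  have h1 : HasFDerivAt (fun w => ((sN w : ℂ)))
      (Complex.ofRealCLM.comp ((1 / (2 * sN z)) • LN z)) z :=
    Complex.ofRealCLM.hasFDerivAt.comp z (hasFDerivAt_sN z)
  exact (hasDerivAt_inv (by exact_mod_cast (sN_pos z).ne')).comp_hasFDerivAt z h1

lemma hasFDerivAt_uc (c : ℂ) (z : ℂ) :
    HasFDerivAt (uc c)
      ((z • ((-(((sN z : ℂ)) ^ 2)⁻¹) • (Complex.ofRealCLM.comp ((1 / (2 * sN z)) • LN z)))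
          + ((sN z : ℂ))⁻¹ • (ContinuousLinearMap.id ℝ ℂ)).prod
        (c • ((-(((sN z : ℂ)) ^ 2)⁻¹) • (Complex.ofRealCLM.comp ((1 / (2 * sN z)) • LN z))))) z := by
  have h1 : HasFDerivAt (fun w : ℂ => w * ((sN w : ℂ))⁻¹)
      (z • ((-(((sN z : ℂ)) ^ 2)⁻¹) • (Complex.ofRealCLM.comp ((1 / (2 * sN z)) • LN z)))
          + ((sN z : ℂ))⁻¹ • (ContinuousLinearMap.id ℝ ℂ)) z :=
    (hasFDerivAt_id z).mul (hasFDerivAt_inv_sN z)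
  have h2 : HasFDerivAt (fun w : ℂ => c * ((sN w : ℂ))⁻¹)
      (c • ((-(((sN z : ℂ)) ^ 2)⁻¹) • (Complex.ofRealCLM.comp ((1 / (2 * sN z)) • LN z)))) z :=
    (hasFDerivAt_inv_sN z).const_mul c
  have h := h1.prodMk h2
  have heq : uc c = fun w : ℂ => (w * ((sN w : ℂ))⁻¹, c * ((sN w : ℂ))⁻¹) := by
    funext w; simp [uc, sN, Nf, div_eq_mul_inv]
  rw [heq]; exact h

lemma fderiv_uc_apply (c : ℂ) (z v : ℂ) :
    fderiv ℝ (uc c) z v =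
      (v / (sN z : ℂ) - ((LN z v / (2 * sN z * Nf z) : ℝ) : ℂ) * z,
       -((LN z v / (2 * sN z * Nf z) : ℝ) : ℂ) * c) := by
  rw [(hasFDerivAt_uc c z).fderiv]
  have hs : (sN z : ℂ) ≠ 0 := by exact_mod_cast (sN_pos z).ne'
  have hn : ((Nf z : ℝ) : ℂ) ≠ 0 := by exact_mod_cast (Nf_pos z).ne'
  have h2 : ((sN z : ℂ))^2 = ((Nf z : ℝ) : ℂ) := by exact_mod_cast congrArg Complex.ofReal (sN_sq z)
  simp only [ContinuousLinearMap.prod_apply, ContinuousLinearMap.add_apply,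
    ContinuousLinearMap.smul_apply, ContinuousLinearMap.comp_apply,
    ContinuousLinearMap.coe_smul', Pi.smul_apply, ContinuousLinearMap.id_apply,
    Complex.ofRealCLM_apply, smul_eq_mul]
  rw [Prod.ext_iff]
  constructor
  · push_cast
    rw [← h2]
    field_simp
    ring
  · push_cast
    rw [← h2]
    field_simp

lemma fderiv_ac_apply (z v : ℂ) :
    fderiv ℝ ac z v = (1/4) * (Nf z)⁻¹ * LN z v := by
  have h : HasFDerivAt ac (((1/4) * (Nf z)⁻¹) • LN z) z := by
    have hl : HasFDerivAt (fun w => Real.log (Nf w)) ((Nf z)⁻¹ • LN z) z :=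
      (Real.hasDerivAt_log (Nf_pos z).ne').comp_hasFDerivAt z (hasFDerivAt_Nf z)
    have h2 := hl.const_mul (1/4)
    rw [smul_smul] at h2
    exact h2
  rw [h.fderiv]; simp

set_option maxHeartbeats 1000000 in
/-- With `z = s + it`, the map `ũ_c = (a_c, u_c)` satisfies the pseudo-holomorphic curve
equations: (i) `∂ₛa_c = λ₀(∂ₜu_c)` and `∂ₜa_c = −λ₀(∂ₛu_c)`; (ii) the projections
`π(∂ₛu_c)` and `π(∂ₜu_c)` lie in the span of `X₁, X₂` at `u_c(z)` and
`π(∂ₛu_c) + J(π(∂ₜu_c)) = 0`, where `J(aX₁ + bX₂) = aX₂ − bX₁`. -/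
theorem stmt_18 (c : ℂ) (hc : ‖c‖ = 1) (z : ℂ) :
    (fderiv ℝ ac z 1 = Λ0 (uc c z) (fderiv ℝ (uc c) z Complex.I)) ∧
    (fderiv ℝ ac z Complex.I = -Λ0 (uc c z) (fderiv ℝ (uc c) z 1)) ∧
    (∃ a b : ℝ,
      projξ (uc c z) (fderiv ℝ (uc c) z Complex.I) =
        a • X1 (uc c z) + b • X2 (uc c z) ∧
      projξ (uc c z) (fderiv ℝ (uc c) z 1) =
        b • X1 (uc c z) - a • X2 (uc c z)) := by
  have hs0 : 0 < sN z := sN_pos z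
  have hs : sN z ≠ 0 := hs0.ne'
  have hn : Nf z ≠ 0 := (Nf_pos z).ne'
  have h2 : sN z ^ 2 = Nf z := sN_sq z
  have hz2 : z.re ^ 2 + z.im ^ 2 = Nf z - 1 := by
    simp [Nf, ← Complex.sq_norm, Complex.sq_norm, Complex.normSq_apply]; ring
  have hc2 : c.re ^ 2 + c.im ^ 2 = 1 := by
    have := Complex.sq_norm c
    rw [hc] at this
    simpa [Complex.normSq_apply, sq] using this.symm
  have hu : uc c z = (z / (sN z : ℂ), c / (sN z : ℂ)) := rfl
  rw [fderiv_ac_apply, fderiv_ac_apply, fderiv_uc_apply, fderiv_uc_apply, hu]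
  refine ⟨?_, ?_, c.re / Nf z, c.im / Nf z, ?_, ?_⟩
  · simp only [Λ0, LN_apply, Complex.div_re, Complex.div_im, Complex.normSq_ofReal,
      Complex.sub_re, Complex.sub_im, Complex.mul_re, Complex.mul_im, Complex.neg_re,
      Complex.neg_im, Complex.ofReal_re, Complex.ofReal_im, Complex.ofReal_mul,
      Complex.I_re, Complex.I_im, Complex.one_re, Complex.one_im, Complex.ofReal_ofNat]
    field_simp
    linear_combination (4*z.re*(sN z)^2) * h2
  · simp only [Λ0, LN_apply, Complex.div_re, Complex.div_im, Complex.normSq_ofReal,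
      Complex.sub_re, Complex.sub_im, Complex.mul_re, Complex.mul_im, Complex.neg_re,
      Complex.neg_im, Complex.ofReal_re, Complex.ofReal_im, Complex.ofReal_mul,
      Complex.I_re, Complex.I_im, Complex.one_re, Complex.one_im, Complex.ofReal_ofNat]
    field_simp
    linear_combination (4*z.im*(sN z)^2) * h2
  · rw [Prod.ext_iff]
    simp only [projξ, R0, X1, X2, Prod.smul_fst, Prod.smul_snd, Prod.fst_add, Prod.snd_add,
      Prod.fst_sub, Prod.snd_sub, Prod.mk.injEq]
    rw [Complex.ext_iff, Complex.ext_iff]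
    simp only [Λ0, LN_apply, Complex.div_re, Complex.div_im, Complex.normSq_ofReal,
      Complex.sub_re, Complex.sub_im, Complex.add_re, Complex.add_im,
      Complex.mul_re, Complex.mul_im, Complex.neg_re,
      Complex.neg_im, Complex.ofReal_re, Complex.ofReal_im, Complex.ofReal_mul,
      Complex.I_re, Complex.I_im, Complex.one_re, Complex.one_im, Complex.ofReal_ofNat,
      Complex.conj_re, Complex.conj_im, Complex.smul_re, Complex.smul_im, smul_eq_mul,
      Complex.re_ofNat, Complex.im_ofNat]
    simp only [mul_one, mul_zero, zero_mul, one_mul, zero_div, add_zero, zero_add,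
      sub_zero, zero_sub, neg_zero, neg_neg]
    refine ⟨⟨?_, ?_⟩, ?_, ?_⟩
    · field_simp
      linear_combination (-z.im*z.re) * h2
    · field_simp
      linear_combination (Nf z - z.im^2 - 1) * h2
        + (-Nf z) * hz2 + (-(sN z)^2) * hc2
    · field_simp
      linear_combination (-z.re*c.im) * h2
    · field_simp
      linear_combination (z.re*c.re) * h2
  · rw [Prod.ext_iff]
    simp only [projξ, R0, X1, X2, Prod.smul_fst, Prod.smul_snd, Prod.fst_sub, Prod.snd_sub,
      Prod.mk.injEq]
    rw [Complex.ext_iff, Complex.ext_iff]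
    simp only [Λ0, LN_apply, Complex.div_re, Complex.div_im, Complex.normSq_ofReal,
      Complex.sub_re, Complex.sub_im, Complex.add_re, Complex.add_im,
      Complex.mul_re, Complex.mul_im, Complex.neg_re,
      Complex.neg_im, Complex.ofReal_re, Complex.ofReal_im, Complex.ofReal_mul,
      Complex.I_re, Complex.I_im, Complex.one_re, Complex.one_im, Complex.ofReal_ofNat,
      Complex.conj_re, Complex.conj_im, Complex.smul_re, Complex.smul_im, smul_eq_mul,
      Complex.re_ofNat, Complex.im_ofNat]
    simp only [mul_one, mul_zero, zero_mul, one_mul, zero_div, add_zero, zero_add,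
      sub_zero, zero_sub, neg_zero, neg_neg]
    refine ⟨⟨?_, ?_⟩, ?_, ?_⟩
    · field_simp
      linear_combination (Nf z - z.re^2 - 1) * h2
        + (-Nf z) * hz2 + (-(sN z)^2) * hc2
    · field_simp
      linear_combination (-z.re*z.im) * h2
    · field_simp
      linear_combination (z.im*c.im) * h2
    · field_simp
      linear_combination (-z.im*c.re) * h2
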